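/- arXiv:2203.00544 — 2 statements merged into one kernel-verified Lean document; each statement's English description precedes it below -/
import Mathlib

section
/- For every school c in a school-choice instance, the minority-reserve choice function C^MR_c is consistent: for all sets of students S1, S2 with C^MR_c(S1) ⊆ S2 ⊆ S1, one has C^MR_c(S1) = C^MR_c(S2). -/
/-!
Common formalization of school-choice instances with reserved seats
(minority reserve, joint seat allocation, discovery program).

Conventions:
* `prio c s` is the priority rank of student `s` at school `c`
  (smaller value = higher priority); injectivity encodes a strict priority order.
* `pref s o` is the preference rank of outcome `o : Option C` for student `s`
  (smaller value = more preferred); `none` denotes being unmatched, and a school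
  `c` is acceptable to `s` iff `pref s (some c) < pref s none`.
-/

open Finset

structure SchoolChoice (S C : Type*) [Fintype S] [DecidableEq S] [Fintype C] [DecidableEq C] where
  /-- the set of disadvantaged (minority) students; the rest are advantaged -/
  dis : Finset S
  /-- preference rank of each outcome (school or `none` = unmatched) for each student -/
  pref : S → Option C → ℕ
  pref_inj : ∀ s, Function.Injective (pref s)
  /-- priority rank of each student at each school (lower = higher priority) -/
  prio : C → S → ℕ
  prio_inj : ∀ c, Function.Injective (prio c)
  /-- quota of each school -/
  q : C → ℕ
  /-- reservation quota of each school -/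
  qR : C → ℕ
  qR_le : ∀ c, qR c ≤ q c

namespace SchoolChoice

variable {S C : Type*} [Fintype S] [DecidableEq S] [Fintype C] [DecidableEq C]

/-- `max(T, >_c, k)`: the `min(k, |T|)` highest-priority students of `T` at school `c`. -/
def maxSet (I : SchoolChoice S C) (c : C) (T : Finset S) (k : ℕ) : Finset S :=
  T.filter fun s => (T.filter fun t => I.prio c t < I.prio c s).card < k

/-- baseline choice function `C^BASE_c` -/
def CBASE (I : SchoolChoice S C) (c : C) (T : Finset S) : Finset S :=
  I.maxSet c T (I.q c)

/-- `S1^R` of the minority-reserve choice function -/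
def mrRes (I : SchoolChoice S C) (c : C) (T : Finset S) : Finset S :=
  I.maxSet c (T ∩ I.dis) (I.qR c)

/-- minority-reserve choice function `C^MR_c` -/
def CMR (I : SchoolChoice S C) (c : C) (T : Finset S) : Finset S :=
  I.mrRes c T ∪ I.maxSet c (T \ I.mrRes c T) (I.q c - (I.mrRes c T).card)

/-- `S1^G` of the joint-seat-allocation choice function -/
def jsaGen (I : SchoolChoice S C) (c : C) (T : Finset S) : Finset S :=
  I.maxSet c T (I.q c - I.qR c)

/-- `S1^R` of the joint-seat-allocation choice function -/
def jsaRes (I : SchoolChoice S C) (c : C) (T : Finset S) : Finset S :=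
  I.maxSet c ((T ∩ I.dis) \ I.jsaGen c T) (I.qR c)

/-- joint-seat-allocation choice function `C^JSA_c` -/
def CJSA (I : SchoolChoice S C) (c : C) (T : Finset S) : Finset S :=
  I.jsaGen c T ∪ I.jsaRes c T ∪
    I.maxSet c (T \ (I.jsaGen c T ∪ I.jsaRes c T))
      (I.q c - (I.jsaGen c T ∪ I.jsaRes c T).card)

/-- school `c` is acceptable to student `s` -/
def acceptable (I : SchoolChoice S C) (s : S) (c : C) : Prop :=
  I.pref s (some c) < I.pref s none

/-- `μ(c)`: the set of students assigned to school `c` by `μ` -/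
def assigned (I : SchoolChoice S C) (μ : S → Option C) (c : C) : Finset S :=
  Finset.univ.filter fun s => μ s = some c

/-- `μ` is a matching: students are assigned only acceptable schools, quotas respected -/
def IsMatching (I : SchoolChoice S C) (μ : S → Option C) : Prop :=
  (∀ s c, μ s = some c → I.acceptable s c) ∧ ∀ c, (I.assigned μ c).card ≤ I.q c

/-- `μ` is stable w.r.t. the choice functions `Ch`: it is a matching and no pair
`(s, c)` with `c` acceptable to `s` satisfies `c >_s μ(s)` and `s ∈ Ch c (μ(c) ∪ {s})`. -/
def IsStable (I : SchoolChoice S C) (Ch : C → Finset S → Finset S) (μ : S → Option C) : Prop :=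
  I.IsMatching μ ∧
    ∀ s c, I.acceptable s c → I.pref s (some c) < I.pref s (μ s) →
      s ∉ Ch c (insert s (I.assigned μ c))

/-- `μ` is the student-optimal stable matching w.r.t. `Ch`:
stable and weakly preferred by every student to every stable matching. -/
def IsOptStable (I : SchoolChoice S C) (Ch : C → Finset S → Finset S) (μ : S → Option C) :
    Prop :=
  I.IsStable Ch μ ∧ ∀ μ', I.IsStable Ch μ' → ∀ s, I.pref s (μ s) ≤ I.pref s (μ' s)

/-! Restricted (sub)instances, used by the three-stage discovery program: only students
in `A` participate and school `c` has quota `q' c`, with baseline (responsive) choice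
functions. -/

def IsMatchingOn (I : SchoolChoice S C) (A : Finset S) (q' : C → ℕ) (μ : S → Option C) :
    Prop :=
  (∀ s, s ∉ A → μ s = none) ∧
    (∀ s c, μ s = some c → I.acceptable s c) ∧ ∀ c, (I.assigned μ c).card ≤ q' c

def IsStableOn (I : SchoolChoice S C) (A : Finset S) (q' : C → ℕ) (μ : S → Option C) : Prop :=
  I.IsMatchingOn A q' μ ∧
    ∀ s ∈ A, ∀ c : C, I.acceptable s c → I.pref s (some c) < I.pref s (μ s) →
      s ∉ I.maxSet c (insert s (I.assigned μ c)) (q' c)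

def IsOptStableOn (I : SchoolChoice S C) (A : Finset S) (q' : C → ℕ) (μ : S → Option C) :
    Prop :=
  I.IsStableOn A q' μ ∧
    ∀ μ', I.IsStableOn A q' μ' → ∀ s ∈ A, I.pref s (μ s) ≤ I.pref s (μ' s)

/-- `μ` is the discovery-program matching: the union of the three stage matchings
`μ1` (general seats, all students), `μ2` (reserved seats, unmatched disadvantaged
students), `μ3` (vacant reserved seats, unmatched advantaged students). -/
def IsDisc (I : SchoolChoice S C) (μ : S → Option C) : Prop :=
  ∃ μ1 μ2 μ3 : S → Option C,
    I.IsOptStableOn Finset.univ (fun c => I.q c - I.qR c) μ1 ∧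
    I.IsOptStableOn (I.dis.filter fun s => μ1 s = none) I.qR μ2 ∧
    I.IsOptStableOn ((Finset.univ \ I.dis).filter fun s => μ1 s = none)
      (fun c => I.qR c - (I.assigned μ2 c).card) μ3 ∧
    ∀ s, μ s = Option.elim (μ1 s) (Option.elim (μ2 s) (μ3 s) some) some

/-- `(s, c)` is a blocking pair of `μ` for disadvantaged students -/
def BlockDis (I : SchoolChoice S C) (μ : S → Option C) (s : S) (c : C) : Prop :=
  s ∈ I.dis ∧ I.acceptable s c ∧ I.pref s (some c) < I.pref s (μ s) ∧
    ∃ s' ∈ I.assigned μ c, s' ∈ I.dis ∧ I.prio c s < I.prio c s'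

/-- `(s, c)` is a blocking pair of `μ` for advantaged students -/
def BlockAdv (I : SchoolChoice S C) (μ : S → Option C) (s : S) (c : C) : Prop :=
  s ∉ I.dis ∧ I.acceptable s c ∧ I.pref s (some c) < I.pref s (μ s) ∧
    ∃ s' ∈ I.assigned μ c, s' ∉ I.dis ∧ I.prio c s < I.prio c s'

/-- `(s, c)` is an in-group blocking pair of `μ` -/
def InGroupBlock (I : SchoolChoice S C) (μ : S → Option C) (s : S) (c : C) : Prop :=
  I.BlockDis μ s c ∨ I.BlockAdv μ s c

/-- all schools share a common priority order over the students -/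
def CommonPriority (I : SchoolChoice S C) : Prop :=
  ∀ c c' : C, ∀ t u : S, I.prio c t < I.prio c u ↔ I.prio c' t < I.prio c' u

/-- the reservation quotas are a smart reserve w.r.t. the baseline matching `μBase` -/
def SmartReserve (I : SchoolChoice S C) (μBase : S → Option C) : Prop :=
  ∀ c, (I.assigned μBase c ∩ I.dis).card ≤ I.qR c

variable (I : SchoolChoice S C) (c : C)

/-- the rank of `s` within `T`: the number of students of `T` with higher priority -/
def rk (T : Finset S) (s : S) : ℕ := (T.filter fun t => I.prio c t < I.prio c s).card

lemma maxSet_eq_rk (T : Finset S) (k : ℕ) :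
    I.maxSet c T k = T.filter fun s => I.rk c T s < k := rfl

lemma rk_lt_card (T : Finset S) {s : S} (hs : s ∈ T) : I.rk c T s < T.card := by
  have hsub : (T.filter fun t => I.prio c t < I.prio c s) ⊆ T.erase s := by
    intro t ht
    rw [mem_filter] at ht
    refine mem_erase.2 ⟨fun h => ?_, ht.1⟩
    subst h; exact lt_irrefl _ ht.2
  calc I.rk c T s ≤ (T.erase s).card := card_le_card hsub
    _ < T.card := card_erase_lt_of_mem hs

lemma rk_lt_rk (T : Finset S) {s t : S} (hs : s ∈ T)
    (h : I.prio c s < I.prio c t) : I.rk c T s < I.rk c T t := by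
  apply card_lt_card
  constructor
  · intro u hu
    rw [mem_filter] at hu ⊢
    exact ⟨hu.1, hu.2.trans h⟩
  · intro hsub
    have hmem : s ∈ T.filter fun u => I.prio c u < I.prio c t := mem_filter.2 ⟨hs, h⟩
    have := (mem_filter.1 (hsub hmem)).2
    exact lt_irrefl _ this

lemma rk_injOn (T : Finset S) : Set.InjOn (I.rk c T) T := by
  intro s hs t ht h
  by_contra hne
  rcases lt_trichotomy (I.prio c s) (I.prio c t) with hlt | heq | hlt
  · exact absurd h (Nat.ne_of_lt (I.rk_lt_rk c T hs hlt))
  · exact hne (I.prio_inj c heq)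
  · exact absurd h.symm (Nat.ne_of_lt (I.rk_lt_rk c T ht hlt))

lemma rk_image (T : Finset S) : T.image (I.rk c T) = Finset.range T.card := by
  apply Finset.eq_of_subset_of_card_le
  · intro x hx
    rcases mem_image.1 hx with ⟨s, hs, rfl⟩
    exact mem_range.2 (I.rk_lt_card c T hs)
  · rw [card_range, card_image_of_injOn (I.rk_injOn c T)]

lemma card_maxSet (T : Finset S) (k : ℕ) : (I.maxSet c T k).card = min k T.card := by
  have hinj : Set.InjOn (I.rk c T) (I.maxSet c T k) := by
    intro s hs t ht h
    exact I.rk_injOn c T ((filter_subset _ _) hs) ((filter_subset _ _) ht) h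
  rw [← card_image_of_injOn hinj, maxSet_eq_rk]
  have him : (T.filter fun s => I.rk c T s < k).image (I.rk c T)
      = (T.image (I.rk c T)).filter (· < k) :=
    (filter_image (s := T) (f := I.rk c T) (p := (· < k))).symm
  rw [him, rk_image]
  have : (Finset.range T.card).filter (fun x => x < k) = Finset.range (min k T.card) := by
    ext x
    simp only [mem_filter, mem_range, lt_min_iff]
    tauto
  rw [this, card_range]

lemma maxSet_consistent (T T' : Finset S) (k : ℕ)
    (h1 : I.maxSet c T k ⊆ T') (h2 : T' ⊆ T) : I.maxSet c T' k = I.maxSet c T k := by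
  ext s
  rw [maxSet_eq_rk, maxSet_eq_rk, mem_filter, mem_filter]
  constructor
  · rintro ⟨hsT', hlt⟩
    refine ⟨h2 hsT', ?_⟩
    by_contra hge
    push_neg at hge
    have hsub : I.maxSet c T k ⊆ T'.filter fun t => I.prio c t < I.prio c s := by
      intro u hu
      have huT' := h1 hu
      have huk : I.rk c T u < k := (mem_filter.1 hu).2
      refine mem_filter.2 ⟨huT', ?_⟩
      rcases lt_trichotomy (I.prio c u) (I.prio c s) with h | h | h
      · exact h
      · have : u = s := I.prio_inj c h
        subst this
        omega
      · have := I.rk_lt_rk c T (h2 hsT') h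
        omega
    have hk : k ≤ (I.maxSet c T k).card := by
      rw [I.card_maxSet c T k]
      have := I.rk_lt_card c T (h2 hsT')
      omega
    have hle : (I.maxSet c T k).card ≤ I.rk c T' s := card_le_card hsub
    omega
  · rintro ⟨hsT, hlt⟩
    refine ⟨h1 (mem_filter.2 ⟨hsT, hlt⟩), ?_⟩
    exact lt_of_le_of_lt (card_le_card (filter_subset_filter _ h2)) hlt

end SchoolChoice
/-- the minority-reserve choice function is consistent. -/
theorem CMR_consistent {S C : Type*} [Fintype S] [DecidableEq S] [Fintype C] [DecidableEq C]
    (I : SchoolChoice S C) (c : C) (S1 S2 : Finset S)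
    (h1 : I.CMR c S1 ⊆ S2) (h2 : S2 ⊆ S1) :
    I.CMR c S1 = I.CMR c S2 := by
  have hR1 : I.mrRes c S1 ⊆ I.CMR c S1 := Finset.subset_union_left
  have hres : I.mrRes c S2 = I.mrRes c S1 := by
    apply I.maxSet_consistent c (S1 ∩ I.dis) (S2 ∩ I.dis) (I.qR c)
    · intro u hu
      have hdis : u ∈ S1 ∩ I.dis := (Finset.filter_subset _ _) hu
      exact Finset.mem_inter.2 ⟨h1 (hR1 hu), (Finset.mem_inter.1 hdis).2⟩
    · exact Finset.inter_subset_inter_right h2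
  have hmain : I.maxSet c (S2 \ I.mrRes c S1) (I.q c - (I.mrRes c S1).card) =
      I.maxSet c (S1 \ I.mrRes c S1) (I.q c - (I.mrRes c S1).card) := by
    apply I.maxSet_consistent c
    · intro u hu
      have huS1 : u ∈ S1 \ I.mrRes c S1 := (Finset.filter_subset _ _) hu
      have huC : u ∈ I.CMR c S1 := Finset.subset_union_right hu
      exact Finset.mem_sdiff.2 ⟨h1 huC, (Finset.mem_sdiff.1 huS1).2⟩
    · exact Finset.sdiff_subset_sdiff h2 (le_refl _)
  unfold SchoolChoice.CMR
  rw [hres, hmain]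
end

section
/- For every school c in a school-choice instance, the joint-seat-allocation choice function C^JSA_c is q_c-acceptant: for every set of students S1, |C^JSA_c(S1)| = min(q_c, |S1|). -/
/-!
Common formalization of school-choice instances with reserved seats
(minority reserve, joint seat allocation, discovery program).

Conventions:
* `prio c s` is the priority rank of student `s` at school `c`
  (smaller value = higher priority); injectivity encodes a strict priority order.
* `pref s o` is the preference rank of outcome `o : Option C` for student `s`
  (smaller value = more preferred); `none` denotes being unmatched, and a school
  `c` is acceptable to `s` iff `pref s (some c) < pref s none`.
-/

open Finset

namespace SchoolChoice

variable {S C : Type*} [Fintype S] [DecidableEq S] [Fintype C] [DecidableEq C]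

lemma maxSet_subset (I : SchoolChoice S C) (c : C) (T : Finset S) (k : ℕ) :
    I.maxSet c T k ⊆ T := Finset.filter_subset _ _

lemma maxSet_card (I : SchoolChoice S C) (c : C) (T : Finset S) (k : ℕ) :
    (I.maxSet c T k).card = min k T.card := by
  classical
  set f : S → ℕ := fun s => (T.filter fun t => I.prio c t < I.prio c s).card with hf
  have hmono : ∀ s ∈ T, ∀ s' ∈ T, I.prio c s < I.prio c s' → f s < f s' := by
    intro s hs s' hs' h
    apply Finset.card_lt_card
    constructor
    · intro t ht
      simp only [Finset.mem_filter] at ht ⊢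
      exact ⟨ht.1, ht.2.trans h⟩
    · intro hsub
      have hmem : s ∈ T.filter fun t => I.prio c t < I.prio c s' := by
        simp [hs, h]
      have := hsub hmem
      simp only [Finset.mem_filter] at this
      exact lt_irrefl _ this.2
  have hinj : Set.InjOn f ↑T := by
    intro a ha b hb hab
    by_contra hne
    have hpne : I.prio c a ≠ I.prio c b := fun h => hne (I.prio_inj c h)
    rcases lt_or_gt_of_ne hpne with h | h
    · exact absurd hab (ne_of_lt (hmono a ha b hb h))
    · exact absurd hab.symm (ne_of_lt (hmono b hb a ha h))
  have himg : T.image f = Finset.range T.card := by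
    apply Finset.eq_of_subset_of_card_le
    · intro n hn
      simp only [Finset.mem_image] at hn
      obtain ⟨s, hs, rfl⟩ := hn
      simp only [Finset.mem_range]
      calc f s ≤ (T.erase s).card := by
            apply Finset.card_le_card
            intro t ht
            simp only [Finset.mem_filter] at ht
            refine Finset.mem_erase.mpr ⟨?_, ht.1⟩
            intro h; subst h; exact lt_irrefl _ ht.2
        _ < T.card := Finset.card_erase_lt_of_mem hs
    · rw [Finset.card_range, Finset.card_image_of_injOn hinj]
  have heq : I.maxSet c T k = T.filter fun s => f s < k := rfl
  rw [heq]
  have hinj' : Set.InjOn f ↑(T.filter fun s => f s < k) :=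
    hinj.mono (by exact_mod_cast Finset.filter_subset _ _)
  calc (T.filter fun s => f s < k).card
      = ((T.filter fun s => f s < k).image f).card :=
        (Finset.card_image_of_injOn hinj').symm
    _ = ((T.image f).filter fun n => n < k).card := by rw [Finset.filter_image]
    _ = ((Finset.range T.card).filter fun n => n < k).card := by rw [himg]
    _ = min k T.card := by
        have : (Finset.range T.card).filter (fun n => n < k) = Finset.range (min k T.card) := by
          ext m
          simp [Finset.mem_range, Nat.lt_min, and_comm]
        rw [this, Finset.card_range]

end SchoolChoice
/-- the joint-seat-allocation choice function is q_c-acceptant. -/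
theorem CJSA_acceptant {S C : Type*} [Fintype S] [DecidableEq S] [Fintype C] [DecidableEq C]
    (I : SchoolChoice S C) (c : C) (S1 : Finset S) :
    (I.CJSA c S1).card = min (I.q c) S1.card := by
  classical
  set G := I.jsaGen c S1 with hG
  set R := I.jsaRes c S1 with hR
  have hGsub : G ⊆ S1 := I.maxSet_subset c S1 _
  have hRsub : R ⊆ (S1 ∩ I.dis) \ G := I.maxSet_subset c _ _
  have hGR : Disjoint G R := by
    refine Finset.disjoint_left.mpr fun a haG haR => ?_
    exact (Finset.mem_sdiff.mp (hRsub haR)).2 haG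
  have hUsub : G ∪ R ⊆ S1 := by
    apply Finset.union_subset hGsub
    intro a ha
    exact (Finset.mem_inter.mp (Finset.mem_sdiff.mp (hRsub ha)).1).1
  have hUcard : (G ∪ R).card = G.card + R.card := Finset.card_union_of_disjoint hGR
  have hGcard : G.card = min (I.q c - I.qR c) S1.card := I.maxSet_card c S1 _
  have hRcard : R.card = min (I.qR c) ((S1 ∩ I.dis) \ G).card := I.maxSet_card c _ _
  have hUq : (G ∪ R).card ≤ I.q c := by
    have h1 : G.card ≤ I.q c - I.qR c := hGcard ▸ Nat.min_le_left _ _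
    have h2 : R.card ≤ I.qR c := hRcard ▸ Nat.min_le_left _ _
    have := I.qR_le c
    omega
  have hUS1 : (G ∪ R).card ≤ S1.card := Finset.card_le_card hUsub
  have hsdiff : (S1 \ (G ∪ R)).card = S1.card - (G ∪ R).card := Finset.card_sdiff_of_subset hUsub
  have hM : (I.maxSet c (S1 \ (G ∪ R)) (I.q c - (G ∪ R).card)).card
      = min (I.q c - (G ∪ R).card) (S1.card - (G ∪ R).card) := by
    rw [I.maxSet_card, hsdiff]
  have hdisj : Disjoint (G ∪ R) (I.maxSet c (S1 \ (G ∪ R)) (I.q c - (G ∪ R).card)) := by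
    refine Finset.disjoint_left.mpr fun a ha hb => ?_
    exact (Finset.mem_sdiff.mp (I.maxSet_subset c _ _ hb)).2 ha
  have : (I.CJSA c S1).card = (G ∪ R).card
      + (I.maxSet c (S1 \ (G ∪ R)) (I.q c - (G ∪ R).card)).card := by
    rw [SchoolChoice.CJSA]
    exact Finset.card_union_of_disjoint hdisj
  rw [this, hM]
  omega
end
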